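/- arXiv:2502.19520 — 2 statements merged into one kernel-verified Lean document; each statement's English description precedes it below -/
import Mathlib

section
/- Let a ∈ ℝ^(2n+1) be nonzero, b₁,…,bₙ ∈ ℂ^(2n+1), and suppose {a, b₁,…,bₙ, b̄₁,…,b̄ₙ} is a basis of ℂ^(2n+1). For 1 ≤ i ≤ 2n+1 define uᵢ = (aⁱ, b₁ⁱ, …, bₙⁱ) ∈ ℝ × ℂⁿ ≅ ℝ^(2n+1). Then u₁, …, u_(2n+1) are linearly independent over ℝ. -/
/-- If `a ∈ ℝ^(2n+1)` is nonzero, `b₁,…,bₙ ∈ ℂ^(2n+1)` and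
`{a, b₁,…,bₙ, b̄₁,…,b̄ₙ}` is a basis of `ℂ^(2n+1)`, then the vectors
`uᵢ = (aⁱ, b₁ⁱ, …, bₙⁱ) ∈ ℝ × ℂⁿ` are linearly independent over `ℝ`. -/
theorem stmt_3 (n : ℕ)
    (a : Fin (2 * n + 1) → ℝ) (ha : a ≠ 0)
    (b : Fin n → Fin (2 * n + 1) → ℂ)
    (F : Option (Fin n ⊕ Fin n) → (Fin (2 * n + 1) → ℂ))
    (hF : F = fun x => match x with
      | none => fun i => (a i : ℂ)
      | some (Sum.inl j) => b j
      | some (Sum.inr j) => fun i => (starRingEnd ℂ) (b j i))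
    (hindep : LinearIndependent ℂ F)
    (hspan : Submodule.span ℂ (Set.range F) = ⊤)
    (u : Fin (2 * n + 1) → ℝ × (Fin n → ℂ))
    (hu : u = fun i => (a i, fun j => b j i)) :
    LinearIndependent ℝ u := by
  rw [Fintype.linearIndependent_iff]
  intro g hg i0
  -- first component: ∑ g i * a i = 0
  have h1 : ∑ i, g i * a i = 0 := by
    have := congrArg Prod.fst hg
    simpa [hu, Prod.fst_sum] using this
  -- second component: for each j, ∑ (g i : ℂ) * b j i = 0
  have h2 : ∀ j, ∑ i, (g i : ℂ) * b j i = 0 := by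
    intro j
    have := congrArg (fun p => p.2 j) hg
    simpa [hu, Prod.snd_sum, Finset.sum_apply, Complex.real_smul] using this
  -- the linear functional v ↦ ∑ gᵢ vᵢ
  let φ : (Fin (2 * n + 1) → ℂ) →ₗ[ℂ] ℂ :=
  { toFun := fun v => ∑ i, (g i : ℂ) * v i
    map_add' := by intro x y; simp [mul_add, Finset.sum_add_distrib]
    map_smul' := by intro r x; simp [Finset.mul_sum]; ring_nf; simp [mul_comm, mul_left_comm]
  }
  have hφ : φ = 0 := by
    apply LinearMap.ext_on hspan
    rintro v ⟨x, rfl⟩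
    subst hF
    match x with
    | none =>
      show (∑ i, (g i : ℂ) * (a i : ℂ)) = 0
      rw [← Complex.ofReal_zero, ← h1]
      push_cast
      ring_nf
    | some (Sum.inl j) =>
      exact h2 j
    | some (Sum.inr j) =>
      show (∑ i, (g i : ℂ) * (starRingEnd ℂ) (b j i)) = 0
      have := congrArg (starRingEnd ℂ) (h2 j)
      simpa [map_sum, map_mul] using this
  have : φ (Pi.single i0 1) = 0 := by rw [hφ]; rfl
  have hc : (g i0 : ℂ) = 0 := by
    simpa [φ, Pi.single_apply, Finset.sum_ite_eq', mul_comm] using this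
  exact_mod_cast hc
end

section
/- The block diagonal matrix M = diag(N, P) with N = [[1,2,-1],[-1,0,-2],[0,1,-1]] and P = [[0,-1],[1,0]] lies in SL(5, ℤ), and its eigenvalues consist of one positive real number α ≠ 1 together with two pairs of complex conjugate non-real eigenvalues. -/
open Matrix Polynomial

/-- The block diagonal matrix `M = diag(N, P)` with `N = [[1,2,-1],[-1,0,-2],[0,1,-1]]`
and `P = [[0,-1],[1,0]]` lies in `SL(5,ℤ)`, and its eigenvalues consist of one positive
real number `α ≠ 1` together with two pairs of complex conjugate non-real eigenvalues. -/
theorem stmt_7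
    (M : Matrix (Fin 3 ⊕ Fin 2) (Fin 3 ⊕ Fin 2) ℤ)
    (hM : M = Matrix.fromBlocks
      !![(1 : ℤ), 2, -1; -1, 0, -2; 0, 1, -1] 0 0 !![(0 : ℤ), -1; 1, 0]) :
    M.det = 1 ∧
    ∃ (α : ℝ) (β₁ β₂ : ℂ), 0 < α ∧ α ≠ 1 ∧ β₁.im ≠ 0 ∧ β₂.im ≠ 0 ∧
      (M.map (Int.cast : ℤ → ℂ)).charpoly.roots =
        {(α : ℂ), β₁, (starRingEnd ℂ) β₁, β₂, (starRingEnd ℂ) β₂} := by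
  subst hM
  constructor
  · rw [Matrix.det_fromBlocks_zero₂₁, Matrix.det_fin_three, Matrix.det_fin_two]
    decide
  · -- the positive real root of x^3 + 3x - 1
    obtain ⟨α, hmem, hα⟩ : ∃ x ∈ Set.Ioo (0:ℝ) 1, x^3 + 3*x - 1 = 0 := by
      have hc : ContinuousOn (fun x : ℝ => x^3 + 3*x - 1) (Set.Icc 0 1) := by fun_prop
      have h := intermediate_value_Ioo (by norm_num : (0:ℝ) ≤ 1) hc
      have h0 : (0:ℝ) ∈ Set.Ioo ((fun x : ℝ => x^3+3*x-1) 0) ((fun x:ℝ => x^3+3*x-1) 1) := by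
        norm_num
      obtain ⟨x, hx, hfx⟩ := h h0
      exact ⟨x, hx, hfx⟩
    obtain ⟨hα0, hα1⟩ := hmem
    set t : ℝ := Real.sqrt (3 + 3/4 * α^2) with ht_def
    have ht2 : t^2 = 3 + 3/4 * α^2 := Real.sq_sqrt (by positivity)
    have ht0 : 0 < t := Real.sqrt_pos.mpr (by positivity)
    set β₁ : ℂ := (↑(-(α/2)) : ℂ) + t * Complex.I with hβ₁
    set β₁' : ℂ := (↑(-(α/2)) : ℂ) - t * Complex.I with hβ₁'
    have hconj1 : (starRingEnd ℂ) β₁ = β₁' := by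
      rw [hβ₁, hβ₁']
      apply Complex.ext <;> simp [map_ofNat, Complex.div_re, Complex.div_im]
    refine ⟨α, β₁, Complex.I, hα0, ne_of_lt hα1, ?_, by simp, ?_⟩
    · rw [hβ₁]; simp [ht0.ne']
    · rw [hconj1, Complex.conj_I]
      -- compute the characteristic polynomial
      have hmapz : ((0 : Matrix (Fin 3) (Fin 2) ℤ).map (Int.cast : ℤ → ℂ)) = 0 :=
        Matrix.map_zero _ Int.cast_zero
      have hmapz' : ((0 : Matrix (Fin 2) (Fin 3) ℤ).map (Int.cast : ℤ → ℂ)) = 0 :=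
        Matrix.map_zero _ Int.cast_zero
      have hN : (!![(1 : ℤ), 2, -1; -1, 0, -2; 0, 1, -1].map
          (Int.cast : ℤ → ℂ)).charpoly = X^3 + 3*X - 1 := by
        have : (!![(1 : ℤ), 2, -1; -1, 0, -2; 0, 1, -1].map
            (Int.cast : ℤ → ℂ)) = !![(1 : ℂ), 2, -1; -1, 0, -2; 0, 1, -1] := by
          ext i j; fin_cases i <;> fin_cases j <;> simp
        rw [this, Matrix.charpoly, Matrix.det_fin_three]
        simp [charmatrix_apply, Matrix.one_apply, map_ofNat]
        ring
      have hP : (!![(0 : ℤ), -1; 1, 0].map (Int.cast : ℤ → ℂ)).charpoly = X^2 + 1 := by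
        have : (!![(0 : ℤ), -1; 1, 0].map (Int.cast : ℤ → ℂ)) = !![(0 : ℂ), -1; 1, 0] := by
          ext i j; fin_cases i <;> fin_cases j <;> simp
        rw [this, Matrix.charpoly, Matrix.det_fin_two]
        simp [charmatrix_apply, Matrix.one_apply]
        ring
      have hcp : ((Matrix.fromBlocks !![(1 : ℤ), 2, -1; -1, 0, -2; 0, 1, -1] 0 0
            !![(0 : ℤ), -1; 1, 0]).map (Int.cast : ℤ → ℂ)).charpoly
          = ((X:ℂ[X])^3 + 3*X - 1) * (X^2 + 1) := by
        rw [Matrix.fromBlocks_map, hmapz, hmapz', Matrix.charpoly_fromBlocks_zero₁₂, hN, hP]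
      rw [hcp]
      -- the needed algebraic relations
      have ha : (α:ℂ)^3 + 3*(α:ℂ) - 1 = 0 := by exact_mod_cast congrArg Complex.ofReal hα
      have htC : ((t:ℝ):ℂ)^2 = 3 + 3/4*((α:ℝ):ℂ)^2 := by
        have h := congrArg (Complex.ofReal) ht2
        push_cast at h; exact h
      have hs : β₁ + β₁' = -(α:ℂ) := by rw [hβ₁, hβ₁']; push_cast; ring
      have hp : β₁ * β₁' = 3 + (α:ℂ)^2 := by
        rw [hβ₁, hβ₁']; push_cast
        linear_combination (-((t:ℝ):ℂ)^2) * Complex.I_sq + htC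
      have key : ((X:ℂ[X])^3 + 3*X - 1) * (X^2 + 1)
          = (({(α:ℂ), β₁, β₁', Complex.I, -Complex.I} : Multiset ℂ).map
              fun a => X - C a).prod := by
        simp only [Multiset.insert_eq_cons, Multiset.map_cons, Multiset.map_singleton,
          Multiset.prod_cons, Multiset.prod_singleton]
        apply Polynomial.funext
        intro x
        simp only [eval_mul, eval_sub, eval_add, eval_pow, eval_X, eval_C, eval_one,
          eval_ofNat]
        linear_combination (x - (α:ℂ)) * (x^2 - (β₁+β₁')*x + β₁*β₁') * Complex.I_sq +
          (x - (α:ℂ)) * x * (x^2+1) * hs - (x - (α:ℂ)) * (x^2+1) * hp + (x^2+1) * ha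
      rw [key, Polynomial.roots_multiset_prod_X_sub_C]
end
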